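/- arXiv:2509.21519 — 4 statements merged into one kernel-verified Lean document; each statement's English description precedes it below -/
import Mathlib

section
/- In the weighted coupon collector problem with L coupons of probabilities p₁, ..., p_L summing to 1, the expected time T₀ to collect all coupons satisfies T₀ ≥ max(1/min_l p_l, L·Σ_{l=1}^{L} 1/l), with the second bound attained with equality if and only if all p_l = 1/L. -/
open Real MeasureTheory Set Filter

/-! ### Auxiliary lemmas for the weighted coupon collector bound -/

lemma one_sub_prod_le_sum {ι : Type*} (s : Finset ι) (a : ι → ℝ)
    (h0 : ∀ i ∈ s, 0 ≤ a i) (h1 : ∀ i ∈ s, a i ≤ 1) :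
    1 - ∏ i ∈ s, a i ≤ ∑ i ∈ s, (1 - a i) := by
  induction s using Finset.cons_induction with
  | empty => simp
  | cons j s hj ih =>
    rw [Finset.prod_cons, Finset.sum_cons]
    have h0' : ∀ i ∈ s, 0 ≤ a i := fun i hi => h0 i (Finset.mem_cons_of_mem hi)
    have h1' : ∀ i ∈ s, a i ≤ 1 := fun i hi => h1 i (Finset.mem_cons_of_mem hi)
    have hP : ∏ i ∈ s, a i ≤ 1 := Finset.prod_le_one h0' h1'
    have hP0 : (0:ℝ) ≤ ∏ i ∈ s, a i := Finset.prod_nonneg h0'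
    have haj0 := h0 j (Finset.mem_cons_self _ _)
    have haj1 := h1 j (Finset.mem_cons_self _ _)
    nlinarith [ih h0' h1']

lemma hasDerivAt_g (t p : ℝ) :
    HasDerivAt (fun p : ℝ => 1 - Real.exp (-(p*t))) (t * Real.exp (-(p*t))) p := by
  have h := (((hasDerivAt_id p).mul_const t).neg).exp
  have h2 := (hasDerivAt_const p (1:ℝ)).sub h
  refine h2.congr_deriv ?_
  simp; ring

lemma hasDerivAt_F {t : ℝ} (p : ℝ) (h1 : 1 - Real.exp (-(p*t)) ≠ 0) :
    HasDerivAt (fun p : ℝ => Real.log (1 - Real.exp (-(p*t))))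
      (t * Real.exp (-(p*t)) / (1 - Real.exp (-(p*t)))) p :=
  (hasDerivAt_g t p).log h1

lemma one_sub_exp_pos {p t : ℝ} (hp : 0 < p) (ht : 0 < t) :
    0 < 1 - Real.exp (-(p*t)) := by
  have : Real.exp (-(p*t)) < 1 := by
    rw [Real.exp_lt_one_iff]; nlinarith
  linarith

lemma strictConcave_F {t : ℝ} (ht : 0 < t) :
    StrictConcaveOn ℝ (Set.Ioi 0) (fun p : ℝ => Real.log (1 - Real.exp (-(p*t)))) := by
  apply strictConcaveOn_of_deriv2_neg (convex_Ioi 0)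
  · apply ContinuousOn.log
    · fun_prop
    · intro x hx
      exact (one_sub_exp_pos hx ht).ne'
  · intro x hx
    rw [interior_Ioi] at hx
    have hne : ∀ p ∈ Set.Ioi (0:ℝ), 1 - Real.exp (-(p*t)) ≠ 0 :=
      fun p hp => (one_sub_exp_pos hp ht).ne'
    have hev : deriv (fun p : ℝ => Real.log (1 - Real.exp (-(p*t))))
        =ᶠ[nhds x] (fun p => t * Real.exp (-(p*t)) / (1 - Real.exp (-(p*t)))) := by
      filter_upwards [isOpen_Ioi.mem_nhds hx] with p hp
      exact (hasDerivAt_F p (hne p hp)).deriv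
    have h2 : deriv^[2] (fun p : ℝ => Real.log (1 - Real.exp (-(p*t)))) x
        = deriv (fun p => t * Real.exp (-(p*t)) / (1 - Real.exp (-(p*t)))) x := by
      show deriv (deriv _) x = _
      exact Filter.EventuallyEq.deriv_eq hev
    rw [h2]
    -- compute the derivative of the quotient
    have hu : HasDerivAt (fun p : ℝ => t * Real.exp (-(p*t)))
        (t * (Real.exp (-(x*t)) * -(1*t))) x :=
      ((((hasDerivAt_id x).mul_const t).neg).exp).const_mul t
    have hv := hasDerivAt_g t x
    have hq : HasDerivAt (fun p : ℝ => t * Real.exp (-(p*t)) / (1 - Real.exp (-(p*t)))) _ x := hu.div hv (hne x hx)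
    rw [hq.deriv]
    have he0 : 0 < Real.exp (-(x*t)) := Real.exp_pos _
    have hd := one_sub_exp_pos hx ht
    rw [div_neg_iff]
    right
    constructor
    · nlinarith [mul_pos (mul_pos ht ht) he0, mul_pos (mul_pos (mul_pos ht ht) he0) he0]
    · nlinarith [sq_nonneg (1 - Real.exp (-(x*t)))]


lemma hasDerivAt_g' (c x : ℝ) :
    HasDerivAt (fun t : ℝ => 1 - Real.exp (-(c*t))) (c * Real.exp (-(c*x))) x := by
  have h := (((hasDerivAt_id x).const_mul c).neg).exp
  have h2 := (hasDerivAt_const x (1:ℝ)).sub h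
  refine h2.congr_deriv ?_
  simp; ring

lemma integrableOn_exp_mul_pow {c : ℝ} (hc : 0 < c) (k : ℕ) :
    IntegrableOn (fun t : ℝ => Real.exp (-(c*t)) * (1 - Real.exp (-(c*t)))^k) (Ioi 0) := by
  apply Integrable.mono' (exp_neg_integrableOn_Ioi 0 hc)
  · apply Continuous.aestronglyMeasurable; fun_prop
  · filter_upwards [ae_restrict_mem measurableSet_Ioi] with t ht
    have he : 0 < Real.exp (-(c*t)) := Real.exp_pos _
    have h0 := one_sub_exp_pos hc ht
    have h1 : 1 - Real.exp (-(c*t)) ≤ 1 := by linarith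
    have hk : (1 - Real.exp (-(c*t)))^k ≤ 1 := pow_le_one₀ h0.le h1
    rw [Real.norm_eq_abs, abs_of_nonneg (by positivity)]
    rw [neg_mul]
    nlinarith [pow_nonneg h0.le k]

lemma tendsto_exp_neg_mul {c : ℝ} (hc : 0 < c) :
    Tendsto (fun t : ℝ => Real.exp (-(c*t))) atTop (nhds 0) := by
  have h : Tendsto (fun t : ℝ => -(c*t)) atTop atBot := by
    simpa using tendsto_id.const_mul_atTop hc
  exact Real.tendsto_exp_atBot.comp h

lemma integral_exp_mul_pow {c : ℝ} (hc : 0 < c) (k : ℕ) :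
    ∫ t in Ioi 0, Real.exp (-(c*t)) * (1 - Real.exp (-(c*t)))^k = 1/(c*(k+1)) := by
  have hderiv : ∀ x ∈ Ici (0:ℝ), HasDerivAt
      (fun t : ℝ => (1 - Real.exp (-(c*t)))^(k+1) / (c*(k+1)))
      (Real.exp (-(c*x)) * (1 - Real.exp (-(c*x)))^k) x := by
    intro x _
    have h := ((hasDerivAt_g' c x).pow (k+1)).div_const (c*(k+1))
    refine h.congr_deriv ?_
    simp only [Nat.add_sub_cancel, Nat.cast_add, Nat.cast_one]
    have hc' : c ≠ 0 := hc.ne'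
    have hk' : ((k:ℝ)+1) ≠ 0 := by positivity
    field_simp
  have htend : Tendsto (fun t : ℝ => (1 - Real.exp (-(c*t)))^(k+1) / (c*(k+1)))
      atTop (nhds (1/(c*(k+1)))) := by
    have h1 : Tendsto (fun t : ℝ => 1 - Real.exp (-(c*t))) atTop (nhds 1) := by
      simpa using (tendsto_exp_neg_mul hc).const_sub 1
    have h2 := (h1.pow (k+1)).div_const (c*(k+1))
    simpa using h2
  have key := integral_Ioi_of_hasDerivAt_of_tendsto' hderiv
    (integrableOn_exp_mul_pow hc k) htend
  rw [key]
  simp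

lemma integral_one_sub_pow (L : ℕ) [NeZero L] :
    ∫ t in Ioi 0, (1 - (1 - Real.exp (-((1/L:ℝ)*t)))^L)
      = L * ∑ k ∈ Finset.range L, 1/((k:ℝ)+1) := by
  have hL : (0:ℝ) < L := Nat.cast_pos.mpr (Nat.pos_of_ne_zero (NeZero.ne L))
  have hc : 0 < ((1:ℝ)/L) := by positivity
  have hfun : ∀ t : ℝ, (1 - (1 - Real.exp (-((1/L:ℝ)*t)))^L)
      = ∑ k ∈ Finset.range L, Real.exp (-((1/L:ℝ)*t)) * (1 - Real.exp (-((1/L:ℝ)*t)))^k := by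
    intro t
    set y := 1 - Real.exp (-((1/L:ℝ)*t)) with hy
    have hgs := geom_sum_mul y L
    have hxy : Real.exp (-((1/L:ℝ)*t)) = 1 - y := by rw [hy]; ring
    calc 1 - y^L = (∑ i ∈ Finset.range L, y^i) * (1 - y) := by linear_combination hgs
    _ = ∑ k ∈ Finset.range L, Real.exp (-((1/L:ℝ)*t)) * y^k := by
        rw [Finset.sum_mul]
        exact Finset.sum_congr rfl fun k _ => by rw [hxy]; ring
  simp_rw [hfun]
  rw [integral_finset_sum _ (fun k _ => integrableOn_exp_mul_pow hc k), Finset.mul_sum]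
  refine Finset.sum_congr rfl fun k _ => ?_
  rw [integral_exp_mul_pow hc k]
  field_simp
lemma jensen_aux {L : ℕ} [NeZero L] (p : Fin L → ℝ) (hp : ∀ l, 0 < p l)
    (hsum : ∑ l, p l = 1) {t : ℝ} (ht : 0 < t) :
    (∑ l, Real.log (1 - Real.exp (-(p l * t))))
      ≤ (L:ℝ) * Real.log (1 - Real.exp (-((1/L:ℝ) * t)))
    ∧ ((∃ j k, p j ≠ p k) →
      (∑ l, Real.log (1 - Real.exp (-(p l * t))))
        < (L:ℝ) * Real.log (1 - Real.exp (-((1/L:ℝ) * t)))) := by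
  have hL : (0:ℝ) < L := Nat.cast_pos.mpr (Nat.pos_of_ne_zero (NeZero.ne L))
  set w : Fin L → ℝ := fun _ => (1/L:ℝ) with hw
  have h₀ : ∀ i ∈ Finset.univ, 0 < w i := fun i _ => by positivity
  have h₁ : ∑ i ∈ Finset.univ, w i = 1 := by
    simp [hw, Finset.sum_const, Finset.card_univ]
  have hmem : ∀ i ∈ Finset.univ, p i ∈ Set.Ioi (0:ℝ) := fun i _ => hp i
  have hsmul : ∑ i ∈ Finset.univ, w i • p i = (1/L:ℝ) := by
    simp only [hw, smul_eq_mul, ← Finset.mul_sum, hsum, mul_one]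
  have hF : ∀ x : ℝ, (fun p : ℝ => Real.log (1 - Real.exp (-(p*t)))) x
      = Real.log (1 - Real.exp (-(x*t))) := fun _ => rfl
  constructor
  · have := ((strictConcave_F ht).concaveOn).le_map_sum (fun i _ => (h₀ i (Finset.mem_univ i)).le) h₁ hmem
    rw [hsmul] at this
    simp only [smul_eq_mul, hw] at this
    rw [← Finset.mul_sum] at this
    have h2 : (∑ i, Real.log (1 - Real.exp (-(p i * t))))
        ≤ (L:ℝ) * ((1/L:ℝ) * ∑ i, Real.log (1 - Real.exp (-(p i * t)))) := by
      rw [← mul_assoc, mul_one_div_cancel hL.ne', one_mul]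
    calc (∑ i, Real.log (1 - Real.exp (-(p i * t))))
        = (L:ℝ) * ((1/L:ℝ) * ∑ i, Real.log (1 - Real.exp (-(p i * t)))) := by rw [← mul_assoc, mul_one_div_cancel hL.ne', one_mul]
      _ ≤ (L:ℝ) * Real.log (1 - Real.exp (-((1/L:ℝ) * t))) := by
          apply mul_le_mul_of_nonneg_left _ hL.le
          convert this using 2
  · intro hne
    obtain ⟨j, k, hjk⟩ := hne
    have := (strictConcave_F ht).lt_map_sum h₀ h₁ hmem ⟨j, Finset.mem_univ j, k, Finset.mem_univ k, hjk⟩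
    rw [hsmul] at this
    simp only [smul_eq_mul, hw] at this
    rw [← Finset.mul_sum] at this
    calc (∑ i, Real.log (1 - Real.exp (-(p i * t))))
        = (L:ℝ) * ((1/L:ℝ) * ∑ i, Real.log (1 - Real.exp (-(p i * t)))) := by rw [← mul_assoc, mul_one_div_cancel hL.ne', one_mul]
      _ < (L:ℝ) * Real.log (1 - Real.exp (-((1/L:ℝ) * t))) := by
          apply mul_lt_mul_of_pos_left _ hL
          convert this using 2

lemma jensen_prod {L : ℕ} [NeZero L] (p : Fin L → ℝ) (hp : ∀ l, 0 < p l)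
    (hsum : ∑ l, p l = 1) {t : ℝ} (ht : 0 < t) :
    (∏ l, (1 - Real.exp (-(p l * t)))) ≤ (1 - Real.exp (-((1/L:ℝ) * t)))^L
    ∧ ((∃ j k, p j ≠ p k) →
      (∏ l, (1 - Real.exp (-(p l * t)))) < (1 - Real.exp (-((1/L:ℝ) * t)))^L) := by
  have hL : (0:ℝ) < L := Nat.cast_pos.mpr (Nat.pos_of_ne_zero (NeZero.ne L))
  have hc : (0:ℝ) < 1/L := by positivity
  have hb : 0 < 1 - Real.exp (-((1/L:ℝ) * t)) := one_sub_exp_pos hc ht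
  have hprod : (∏ l, (1 - Real.exp (-(p l * t))))
      = Real.exp (∑ l, Real.log (1 - Real.exp (-(p l * t)))) := by
    rw [Real.exp_sum]
    exact Finset.prod_congr rfl fun l _ => (Real.exp_log (one_sub_exp_pos (hp l) ht)).symm
  have hpow : (1 - Real.exp (-((1/L:ℝ) * t)))^L
      = Real.exp ((L:ℝ) * Real.log (1 - Real.exp (-((1/L:ℝ) * t)))) := by
    rw [← Real.log_pow, Real.exp_log (pow_pos hb L)]
  obtain ⟨hle, hlt⟩ := jensen_aux p hp hsum ht
  constructor
  · rw [hprod, hpow]; exact Real.exp_le_exp.mpr hle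
  · intro hne; rw [hprod, hpow]; exact Real.exp_lt_exp.mpr (hlt hne)

lemma main_integrable {L : ℕ} [NeZero L] (p : Fin L → ℝ) (hp : ∀ l, 0 < p l) :
    IntegrableOn (fun t : ℝ => 1 - ∏ l, (1 - Real.exp (-(p l * t)))) (Ioi 0) := by
  apply Integrable.mono' (g := fun t => ∑ l, Real.exp (-(p l * t)))
  · apply integrable_finset_sum
    intro l _
    have := exp_neg_integrableOn_Ioi 0 (hp l)
    simpa [neg_mul] using this.integrable
  · apply Continuous.aestronglyMeasurable; fun_prop
  · filter_upwards [ae_restrict_mem measurableSet_Ioi] with t ht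
    have h0 : ∀ l ∈ Finset.univ, (0:ℝ) ≤ 1 - Real.exp (-(p l * t)) :=
      fun l _ => (one_sub_exp_pos (hp l) ht).le
    have h1 : ∀ l ∈ Finset.univ, (1 - Real.exp (-(p l * t))) ≤ 1 :=
      fun l _ => by have := Real.exp_pos (-(p l * t)); linarith
    have hW := one_sub_prod_le_sum Finset.univ (fun l => 1 - Real.exp (-(p l * t))) h0 h1
    simp only [sub_sub_cancel] at hW
    have hP : (∏ l, (1 - Real.exp (-(p l * t)))) ≤ 1 := Finset.prod_le_one h0 h1
    rw [Real.norm_eq_abs, abs_of_nonneg (by linarith)]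
    exact hW

/-- Weighted coupon collector: with coupon probabilities `p₁, …, p_L` summing to `1`,
the expected collection time `T₀ = ∫₀^∞ (1 - ∏ₗ (1 - e^{-pₗ t})) dt` satisfies
`T₀ ≥ max (1 / minₗ pₗ) (L ∑_{l=1}^L 1/l)`, and the second bound is attained with
equality iff all `pₗ = 1/L`. -/
theorem stmt12 (L : ℕ) [NeZero L] (p : Fin L → ℝ) (hp : ∀ l, 0 < p l)
    (hsum : ∑ l, p l = 1) :
    (∫ t in Set.Ioi (0 : ℝ), (1 - ∏ l, (1 - Real.exp (-(p l * t)))))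
        ≥ max (1 / Finset.univ.inf' Finset.univ_nonempty p)
            ((L : ℝ) * ∑ l ∈ Finset.range L, 1 / ((l : ℝ) + 1)) ∧
    ((∫ t in Set.Ioi (0 : ℝ), (1 - ∏ l, (1 - Real.exp (-(p l * t)))))
        = (L : ℝ) * ∑ l ∈ Finset.range L, 1 / ((l : ℝ) + 1)
      ↔ ∀ l, p l = 1 / L) := by
  have hL : (0:ℝ) < L := Nat.cast_pos.mpr (Nat.pos_of_ne_zero (NeZero.ne L))
  have hc : (0:ℝ) < 1/L := by positivity
  set F : ℝ → ℝ := fun t => 1 - ∏ l, (1 - Real.exp (-(p l * t))) with hF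
  set G : ℝ → ℝ := fun t => 1 - (1 - Real.exp (-((1/L:ℝ) * t)))^L with hG
  have hfint : IntegrableOn F (Set.Ioi 0) := main_integrable p hp
  have hgint : IntegrableOn G (Set.Ioi 0) := by
    have h := main_integrable (fun _ : Fin L => (1/L:ℝ)) (fun _ => hc)
    refine h.congr_fun (fun t _ => ?_) measurableSet_Ioi
    simp [Finset.prod_const, Finset.card_univ, hG]
  have hGval : ∫ t in Set.Ioi (0:ℝ), G t
      = (L:ℝ) * ∑ k ∈ Finset.range L, 1/((k:ℝ)+1) := integral_one_sub_pow L
  -- pointwise bound 2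
  have hGleF : ∀ t ∈ Set.Ioi (0:ℝ), G t ≤ F t := by
    intro t ht
    have := (jensen_prod p hp hsum ht).1
    simp only [hF, hG]
    linarith
  have hbound2 : (L:ℝ) * ∑ k ∈ Finset.range L, 1/((k:ℝ)+1) ≤ ∫ t in Set.Ioi (0:ℝ), F t := by
    rw [← hGval]
    exact setIntegral_mono_on hgint hfint measurableSet_Ioi hGleF
  -- bound 1
  obtain ⟨l₀, -, hm⟩ := Finset.exists_mem_eq_inf' (Finset.univ_nonempty) p
  have hm0 : 0 < Finset.univ.inf' Finset.univ_nonempty p := hm ▸ hp l₀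
  set m := Finset.univ.inf' Finset.univ_nonempty p with hmdef
  have hexpint : IntegrableOn (fun t : ℝ => Real.exp (-(m*t))) (Set.Ioi 0) := by
    have := exp_neg_integrableOn_Ioi 0 hm0
    simpa [neg_mul] using this
  have hexpval : ∫ t in Set.Ioi (0:ℝ), Real.exp (-(m*t)) = 1/m := by
    have h := integral_exp_mul_pow hm0 0
    simpa using h
  have hbound1 : 1/m ≤ ∫ t in Set.Ioi (0:ℝ), F t := by
    rw [← hexpval]
    refine setIntegral_mono_on hexpint hfint measurableSet_Ioi (fun t ht => ?_)
    have h0 : ∀ l ∈ Finset.univ, (0:ℝ) ≤ 1 - Real.exp (-(p l * t)) :=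
      fun l _ => (one_sub_exp_pos (hp l) ht).le
    have h1 : ∀ l ∈ Finset.univ, (1 - Real.exp (-(p l * t))) ≤ 1 :=
      fun l _ => by have := Real.exp_pos (-(p l * t)); linarith
    have hsplit := (Finset.mul_prod_erase Finset.univ
      (fun l => 1 - Real.exp (-(p l * t))) (Finset.mem_univ l₀)).symm
    have herase : (∏ l ∈ Finset.univ.erase l₀, (1 - Real.exp (-(p l * t)))) ≤ 1 :=
      Finset.prod_le_one (fun l hl => h0 l (Finset.mem_univ l))
        (fun l hl => h1 l (Finset.mem_univ l))
    have herase0 : (0:ℝ) ≤ ∏ l ∈ Finset.univ.erase l₀, (1 - Real.exp (-(p l * t))) :=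
      Finset.prod_nonneg (fun l hl => h0 l (Finset.mem_univ l))
    have hprodle : (∏ l, (1 - Real.exp (-(p l * t)))) ≤ 1 - Real.exp (-(p l₀ * t)) := by
      rw [hsplit]
      nlinarith [h0 l₀ (Finset.mem_univ l₀)]
    have hml₀ : m = p l₀ := hm
    simp only [hF]
    rw [hml₀]
    linarith
  refine ⟨?_, ?_, ?_⟩
  · rw [ge_iff_le]
    exact max_le hbound1 hbound2
  · -- equality → all equal
    intro heq
    by_contra hcon
    push_neg at hcon
    obtain ⟨l₀', hl₀'⟩ := hcon
    have hne : ∃ j k, p j ≠ p k := by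
      by_contra hall
      push_neg at hall
      apply hl₀'
      have hconst : ∀ l, p l = p l₀' := fun l => hall l l₀'
      have hsum' : (L:ℝ) * p l₀' = 1 := by
        rw [← hsum]
        simp [hconst, Finset.sum_const, Finset.card_univ, nsmul_eq_mul]
      rw [eq_div_iff hL.ne']
      linarith [hsum']
    have hstrict : ∀ t ∈ Set.Ioi (0:ℝ), G t < F t := by
      intro t ht
      have := (jensen_prod p hp hsum ht).2 hne
      simp only [hF, hG]
      linarith
    have hpos : 0 < ∫ t in Set.Ioi (0:ℝ), (F t - G t) := by
      refine (integral_pos_iff_support_of_nonneg_ae ?_ ?_).mpr ?_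
      · filter_upwards [ae_restrict_mem measurableSet_Ioi] with t ht
        exact (sub_pos.mpr (hstrict t ht)).le
      · exact hfint.sub hgint
      · have hsub : Set.Ioi (0:ℝ) ⊆ Function.support (fun t => F t - G t) :=
          fun t ht => (sub_pos.mpr (hstrict t ht)).ne'
        calc (0:ENNReal) < volume.restrict (Set.Ioi 0) (Set.Ioi 0) := by
              rw [Measure.restrict_apply_self]; simp [Real.volume_Ioi]
          _ ≤ _ := measure_mono hsub
    rw [integral_sub hfint hgint] at hpos
    have hFval : (∫ t in Set.Ioi (0:ℝ), F t)
        = (L : ℝ) * ∑ l ∈ Finset.range L, 1 / ((l : ℝ) + 1) := heq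
    rw [hFval, hGval] at hpos
    linarith
  · -- all equal → equality
    intro heq
    have : ∀ t : ℝ, F t = G t := by
      intro t
      simp only [hF, hG]
      congr 1
      rw [show (∏ l, (1 - Real.exp (-(p l * t)))) = ∏ l : Fin L, (1 - Real.exp (-((1/L:ℝ) * t))) from
        Finset.prod_congr rfl fun l _ => by rw [heq l]]
      simp [Finset.prod_const, Finset.card_univ]
    calc ∫ t in Set.Ioi (0:ℝ), F t = ∫ t in Set.Ioi (0:ℝ), G t := by
          exact setIntegral_congr_fun measurableSet_Ioi (fun t _ => this t)
      _ = _ := hGval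
end

section
/- Let σ be C¹ on [0,∞) with σ'(x) > 0 for x > 0, and let φ(x) = σ'(x)/x be nondecreasing on (0, √2]. Fix probabilities p₁ > p₂ ≥ ... ≥ p_n > 0 (with strict maximum p₁). Then the unique maximizer of F(s) = Σ_g p_g σ(s_g) over {s ∈ ℝⁿ : s_g ≥ 0, Σ_g s_g² ≤ 2} is s₁ = √2, s_g = 0 for g ≥ 2. -/
/-- Peaked (memorization) optimum: if `σ` is `C¹` on `[0, ∞)` with `σ' > 0` on `(0, ∞)`
and `φ(x) = σ'(x)/x` nondecreasing on `(0, √2]`, and `p₁ > p₂ ≥ … ≥ pₙ > 0`, then the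
unique maximizer of `F(s) = ∑_g p_g σ(s_g)` over `{s : s_g ≥ 0, ∑ s_g² ≤ 2}` is
`s₁ = √2`, `s_g = 0` for `g ≥ 2`. -/
theorem stmt14 (n : ℕ) [NeZero n] (σ σ' : ℝ → ℝ)
    (hder : ∀ x ∈ Set.Ici (0 : ℝ), HasDerivWithinAt σ (σ' x) (Set.Ici 0) x)
    (hcont : ContinuousOn σ' (Set.Ici 0))
    (hpos : ∀ x : ℝ, 0 < x → 0 < σ' x)
    (hφ : ∀ x y : ℝ, 0 < x → x ≤ y → y ≤ Real.sqrt 2 → σ' x / x ≤ σ' y / y)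
    (p : Fin n → ℝ) (hp : ∀ g, 0 < p g)
    (hmono : ∀ i j : Fin n, i ≤ j → p j ≤ p i)
    (hmax : ∀ g : Fin n, g ≠ 0 → p g < p 0) :
    (∀ s : Fin n → ℝ, (∀ g, 0 ≤ s g) → (∑ g, (s g) ^ 2) ≤ 2 →
      ∑ g, p g * σ (s g)
        ≤ ∑ g, p g * σ (if g = 0 then Real.sqrt 2 else 0)) ∧
    (∀ s : Fin n → ℝ, (∀ g, 0 ≤ s g) → (∑ g, (s g) ^ 2) ≤ 2 →
      ∑ g, p g * σ (s g) = ∑ g, p g * σ (if g = 0 then Real.sqrt 2 else 0) →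
      s = fun g => if g = 0 then Real.sqrt 2 else 0) := by
  have hσcont : ContinuousOn σ (Set.Ici 0) := fun x hx => (hder x hx).continuousWithinAt
  have hderAt : ∀ x : ℝ, 0 < x → HasDerivAt σ (σ' x) x := fun x hx =>
    (hder x (le_of_lt hx)).hasDerivAt (Ici_mem_nhds hx)
  -- σ strictly increasing on Ici 0
  have hsm : StrictMonoOn σ (Set.Ici 0) := by
    apply strictMonoOn_of_deriv_pos (convex_Ici 0) hσcont
    intro x hx
    rw [interior_Ici] at hx
    rw [(hderAt x hx).deriv]
    exact hpos x hx
  have hsqrt2 : (0:ℝ) < Real.sqrt 2 := Real.sqrt_pos.2 (by norm_num)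
  set c : ℝ := σ (Real.sqrt 2) - σ 0 with hc
  have hcpos : 0 < c := sub_pos.2 (hsm (Set.mem_Ici.2 (le_refl 0)) (Set.mem_Ici.2 (le_of_lt hsqrt2)) hsqrt2)
  -- G u = σ (√u) is convex on [0,2]
  set G : ℝ → ℝ := fun u => σ (Real.sqrt u) with hG
  have hGd : ∀ u ∈ Set.Ioo (0:ℝ) 2, HasDerivAt G (σ' (Real.sqrt u) * (1 / (2 * Real.sqrt u))) u := by
    intro u hu
    exact (hderAt _ (Real.sqrt_pos.2 hu.1)).comp u (Real.hasDerivAt_sqrt (ne_of_gt hu.1))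
  have hGconv : ConvexOn ℝ (Set.Icc (0:ℝ) 2) G := by
    apply MonotoneOn.convexOn_of_deriv (convex_Icc 0 2)
    · exact hσcont.comp Real.continuous_sqrt.continuousOn
        (fun u _ => Real.sqrt_nonneg u)
    · rw [interior_Icc]
      exact fun u hu => (hGd u hu).differentiableAt.differentiableWithinAt
    · rw [interior_Icc]
      intro u hu v hv huv
      rw [(hGd u hu).deriv, (hGd v hv).deriv]
      have h1 : (0:ℝ) < Real.sqrt u := Real.sqrt_pos.2 hu.1
      have h2 : Real.sqrt u ≤ Real.sqrt v := Real.sqrt_le_sqrt huv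
      have h3 : Real.sqrt v ≤ Real.sqrt 2 := Real.sqrt_le_sqrt hv.2.le
      have := hφ _ _ h1 h2 h3
      have hv1 : (0:ℝ) < Real.sqrt v := lt_of_lt_of_le h1 h2
      rw [mul_one_div, mul_one_div, div_le_div_iff₀ (by positivity) (by positivity)] at *
      nlinarith [this]
  -- chord inequality
  have chord : ∀ u : ℝ, 0 ≤ u → u ≤ 2 → G u ≤ G 0 + u / 2 * c := by
    intro u h0 h2
    have key := hGconv.2 (Set.left_mem_Icc.2 (by norm_num : (0:ℝ) ≤ 2))
      (Set.right_mem_Icc.2 (by norm_num : (0:ℝ) ≤ 2))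
      (show (0:ℝ) ≤ 1 - u/2 by linarith) (show (0:ℝ) ≤ u/2 by linarith) (by ring)
    simp only [smul_eq_mul] at key
    have harg : (1 - u/2) * 0 + u/2 * 2 = u := by ring
    rw [harg] at key
    have hG0 : G 0 = σ 0 := by simp [hG]
    rw [hG0, hc]
    nlinarith [key]
  have pointwise : ∀ x : ℝ, 0 ≤ x → x ^ 2 ≤ 2 → σ x ≤ σ 0 + x ^ 2 / 2 * c := by
    intro x hx h2
    have h := chord (x ^ 2) (by positivity) h2
    simp only [hG] at h
    rwa [Real.sqrt_sq hx, Real.sqrt_zero] at h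
  -- target sum value
  have htarget : ∑ g, p g * σ (if g = 0 then Real.sqrt 2 else 0)
      = (∑ g, p g * σ 0) + p 0 * c := by
    have : ∀ g : Fin n, p g * σ (if g = 0 then Real.sqrt 2 else 0)
        = p g * σ 0 + (if g = 0 then p 0 * c else 0) := by
      intro g
      by_cases h : g = 0 <;> simp [h, hc] <;> ring
    rw [Finset.sum_congr rfl (fun g _ => this g), Finset.sum_add_distrib]
    simp
  -- main bound, and exact value of slack
  have key : ∀ s : Fin n → ℝ, (∀ g, 0 ≤ s g) → (∑ g, (s g) ^ 2) ≤ 2 →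
      ∑ g, p g * σ (s g) ≤ (∑ g, p g * σ 0) + c / 2 * (∑ g, p g * (s g) ^ 2) := by
    intro s hs hsum
    have hsg2 : ∀ g, (s g) ^ 2 ≤ 2 := by
      intro g
      have h := Finset.single_le_sum (f := fun g => (s g) ^ 2)
        (fun i _ => sq_nonneg (s i)) (Finset.mem_univ g)
      have h : (s g) ^ 2 ≤ ∑ g, (s g) ^ 2 := h
      linarith
    calc ∑ g, p g * σ (s g) ≤ ∑ g, (p g * σ 0 + c / 2 * (p g * (s g) ^ 2)) := by
          apply Finset.sum_le_sum
          intro g _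
          have := pointwise (s g) (hs g) (hsg2 g)
          nlinarith [(hp g).le, this]
      _ = (∑ g, p g * σ 0) + c / 2 * (∑ g, p g * (s g) ^ 2) := by
          rw [Finset.sum_add_distrib, ← Finset.mul_sum]
  have pbound : ∀ s : Fin n → ℝ, (∀ g, 0 ≤ s g) → (∑ g, (s g) ^ 2) ≤ 2 →
      (∑ g, p g * (s g) ^ 2) ≤ 2 * p 0 := by
    intro s hs hsum
    calc ∑ g, p g * (s g) ^ 2 ≤ ∑ g, p 0 * (s g) ^ 2 := by
          apply Finset.sum_le_sum
          intro g _
          have : p g ≤ p 0 := by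
            by_cases h : g = 0
            · rw [h]
            · exact (hmax g h).le
          nlinarith [sq_nonneg (s g)]
      _ = p 0 * ∑ g, (s g) ^ 2 := by rw [Finset.mul_sum]
      _ ≤ 2 * p 0 := by nlinarith [hp 0, hsum]
  constructor
  · intro s hs hsum
    calc ∑ g, p g * σ (s g) ≤ (∑ g, p g * σ 0) + c / 2 * (∑ g, p g * (s g) ^ 2) :=
          key s hs hsum
      _ ≤ (∑ g, p g * σ 0) + c / 2 * (2 * p 0) := by nlinarith [pbound s hs hsum, hcpos]
      _ = ∑ g, p g * σ (if g = 0 then Real.sqrt 2 else 0) := by rw [htarget]; ring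
  · intro s hs hsum heq
    -- equality forces ∑ p g * s g ^2 = 2 * p 0
    have hT : (∑ g, p g * (s g) ^ 2) = 2 * p 0 := by
      have h1 := key s hs hsum
      have h2 := pbound s hs hsum
      rw [heq, htarget] at h1
      nlinarith [h1, h2, hcpos]
    -- hence ∑ (p 0 - p g) * s g ^2 = 0 and ∑ s g ^2 = 2
    have hzero : ∀ g : Fin n, g ≠ 0 → s g = 0 := by
      have hsum0 : ∑ g, (p 0 - p g) * (s g) ^ 2 ≤ 0 := by
        have : ∑ g, (p 0 - p g) * (s g) ^ 2
            = p 0 * (∑ g, (s g) ^ 2) - ∑ g, p g * (s g) ^ 2 := by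
          rw [Finset.mul_sum, ← Finset.sum_sub_distrib]
          exact Finset.sum_congr rfl fun g _ => by ring
        rw [this, hT]
        nlinarith [hp 0, hsum]
      have hnn : ∀ g ∈ Finset.univ, 0 ≤ (p 0 - p g) * (s g) ^ 2 := by
        intro g _
        have : p g ≤ p 0 := by
          by_cases h : g = 0
          · rw [h]
          · exact (hmax g h).le
        nlinarith [sq_nonneg (s g)]
      have hall : ∀ g ∈ Finset.univ, (p 0 - p g) * (s g) ^ 2 = 0 := by
        rw [← Finset.sum_eq_zero_iff_of_nonneg hnn]
        exact le_antisymm hsum0 (Finset.sum_nonneg hnn)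
      intro g hg
      have := hall g (Finset.mem_univ g)
      have hd : 0 < p 0 - p g := sub_pos.2 (hmax g hg)
      have : (s g) ^ 2 = 0 := by
        rcases mul_eq_zero.1 this with h | h
        · exact absurd h (ne_of_gt hd)
        · exact h
      exact pow_eq_zero_iff (n := 2) (by norm_num) |>.1 this
    have hs0 : s 0 = Real.sqrt 2 := by
      have : ∑ g, p g * (s g) ^ 2 = p 0 * (s 0) ^ 2 := by
        rw [← Finset.sum_subset (Finset.subset_univ {0})]
        · simp
        · intro g _ hg
          simp only [Finset.mem_singleton] at hg
          rw [hzero g hg]; ring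
      rw [this] at hT
      have hsq : (s 0) ^ 2 = 2 :=
        mul_left_cancel₀ (hp 0).ne' (by linarith [hT] : p 0 * (s 0) ^ 2 = p 0 * 2)
      rw [← Real.sqrt_sq (hs 0), hsq]
    funext g
    by_cases h : g = 0
    · simp [h, hs0]
    · simp [h, hzero g h]
end

section
/- Let σ be C¹ with σ'(x) > 0 and φ(x) = σ'(x)/x strictly decreasing on (0, ∞) with φ(0⁺) = ∞. Then the maximizer of F(s) = Σ_g p_g σ(s_g) subject to s_g ≥ 0 and Σ_g s_g² = 2 has all coordinates strictly positive, given by s_g = φ⁻¹(2λ/p_g) for the unique λ > 0 satisfying Σ_g φ⁻¹(2λ/p_g)² = 2; moreover p_i > p_j implies s_i > s_j > 0. -/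
open Set Filter

lemma tangent (σ σ' : ℝ → ℝ)
    (hder : ∀ x : ℝ, HasDerivAt σ (σ' x) x)
    (hφdec : StrictAntiOn (fun x => σ' x / x) (Set.Ioi 0))
    {a b : ℝ} (ha : 0 < a) (hb : 0 ≤ b) :
    σ b ≤ σ a + σ' a / a / 2 * (b ^ 2 - a ^ 2) := by
  set c : ℝ := σ' a / a with hc
  set g : ℝ → ℝ := fun x => σ x - c / 2 * x ^ 2 with hgdef
  have hg : ∀ x : ℝ, HasDerivAt g (σ' x - c * x) x := by
    intro x
    have h2 : HasDerivAt (fun x : ℝ => c / 2 * x ^ 2) (c * x) x := by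
      have := (hasDerivAt_pow 2 x).const_mul (c / 2)
      exact this.congr_deriv (by norm_num; ring)
    exact (hder x).sub h2
  have hgc : Continuous g := by
    have : Differentiable ℝ g := fun x => (hg x).differentiableAt
    exact this.continuous
  have hderiv : ∀ x : ℝ, deriv g x = σ' x - c * x := fun x => (hg x).deriv
  have key : ∀ x : ℝ, 0 < x → x ≠ a → (x < a → 0 < deriv g x) ∧ (a < x → deriv g x < 0) := by
    intro x hx _
    constructor
    · intro hxa
      have hφ : c < σ' x / x := hφdec (mem_Ioi.2 hx) (mem_Ioi.2 ha) hxa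
      rw [hderiv]
      have hxne : (x:ℝ) ≠ 0 := ne_of_gt hx
      have : σ' x - c * x = x * (σ' x / x - c) := by
        field_simp
      rw [this]
      exact mul_pos hx (by linarith)
    · intro hax
      have hφ : σ' x / x < c := hφdec (mem_Ioi.2 ha) (mem_Ioi.2 hx) hax
      rw [hderiv]
      have hxne : (x:ℝ) ≠ 0 := ne_of_gt hx
      have : σ' x - c * x = x * (σ' x / x - c) := by field_simp
      rw [this]
      have h0 : σ' x / x - c < 0 := by linarith
      exact mul_neg_of_pos_of_neg hx h0
  have hmain : g b ≤ g a := by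
    rcases lt_trichotomy b a with h | h | h
    · have hmono : StrictMonoOn g (Icc 0 a) :=
        strictMonoOn_of_deriv_pos (convex_Icc 0 a) hgc.continuousOn (by
          intro x hx
          rw [interior_Icc] at hx
          exact ((key x hx.1 (ne_of_lt hx.2)).1 hx.2))
      exact (hmono ⟨hb, h.le⟩ ⟨ha.le, le_refl a⟩ h).le
    · rw [h]
    · have hanti : StrictAntiOn g (Ici a) :=
        strictAntiOn_of_deriv_neg (convex_Ici a) hgc.continuousOn (by
          intro x hx
          rw [interior_Ici] at hx
          exact (key x (ha.trans hx) (ne_of_gt hx)).2 hx)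
      exact (hanti (self_mem_Ici) (mem_Ici.2 h.le) h).le
  simp only [hgdef] at hmain
  nlinarith [hmain]


lemma sum_update_aux {n : ℕ} (F : Fin n → ℝ → ℝ) (t : Fin n → ℝ) (k : Fin n) (v : ℝ) :
    ∑ g, F g (Function.update t k v g) = ∑ g, F g (t g) - F k (t k) + F k v := by
  rw [← Finset.sum_erase_add _ _ (Finset.mem_univ k),
      ← Finset.sum_erase_add (f := fun g => F g (t g)) (s := Finset.univ) (a := k) (Finset.mem_univ k)]
  have h1 : ∑ g ∈ Finset.univ.erase k, F g (Function.update t k v g)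
      = ∑ g ∈ Finset.univ.erase k, F g (t g) := by
    refine Finset.sum_congr rfl fun x hx => ?_
    rw [Function.update_of_ne (Finset.ne_of_mem_erase hx)]
  rw [h1, Function.update_self]
  ring


/-- Spreading optimum: if `σ` is `C¹` with `σ' > 0` on `(0, ∞)`, `φ(x) = σ'(x)/x`
strictly decreasing on `(0, ∞)` with `φ(0⁺) = ∞`, then the maximizer of
`F(s) = ∑_g p_g σ(s_g)` subject to `s_g ≥ 0`, `∑ s_g² = 2` has all coordinates strictly
positive, given by `φ(s_g) = 2λ/p_g` for the unique `λ > 0` making `∑ s_g² = 2`;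
moreover `p_i > p_j` implies `s_i > s_j > 0`. -/
theorem stmt15 (n : ℕ) [NeZero n] (σ σ' : ℝ → ℝ)
    (hder : ∀ x : ℝ, HasDerivAt σ (σ' x) x) (hcont : Continuous σ')
    (hpos : ∀ x : ℝ, 0 < x → 0 < σ' x)
    (hφdec : StrictAntiOn (fun x => σ' x / x) (Set.Ioi 0))
    (hφtop : Filter.Tendsto (fun x => σ' x / x) (nhdsWithin 0 (Set.Ioi 0)) Filter.atTop)
    (p : Fin n → ℝ) (hp : ∀ g, 0 < p g) :
    ∃ lam : ℝ, 0 < lam ∧ ∃ s : Fin n → ℝ,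
      (∀ g, 0 < s g ∧ σ' (s g) / (s g) = 2 * lam / p g) ∧
      (∑ g, (s g) ^ 2 = 2) ∧
      (∀ s' : Fin n → ℝ, (∀ g, 0 ≤ s' g) → (∑ g, (s' g) ^ 2 = 2) →
        ∑ g, p g * σ (s' g) ≤ ∑ g, p g * σ (s g)) ∧
      (∀ i j : Fin n, p j < p i → s j < s i) ∧
      (∀ lam' : ℝ, ∀ s'' : Fin n → ℝ, 0 < lam' →
        (∀ g, 0 < s'' g ∧ σ' (s'' g) / (s'' g) = 2 * lam' / p g) →
        (∑ g, (s'' g) ^ 2 = 2) → lam' = lam ∧ s'' = s) := by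
  classical
  have hn : (0 : ℕ) < n := Nat.pos_of_ne_zero (NeZero.ne n)
  set φ : ℝ → ℝ := fun x => σ' x / x with hφdef
  have hσdiff : Differentiable ℝ σ := fun x => (hder x).differentiableAt
  have hσc : Continuous σ := hσdiff.continuous
  have hφcont : ∀ x : ℝ, 0 < x → ContinuousAt φ x := fun x hx =>
    (hcont.continuousAt).div continuousAt_id (ne_of_gt hx)
  have hφpos : ∀ x : ℝ, 0 < x → 0 < φ x := fun x hx => div_pos (hpos x hx) hx
  set K : Set (Fin n → ℝ) := {s | (∀ g, 0 ≤ s g) ∧ ∑ g, s g ^ 2 = 2} with hKdef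
  set F : (Fin n → ℝ) → ℝ := fun s => ∑ g, p g * σ (s g) with hFdef
  have hFc : Continuous F := by
    apply continuous_finset_sum
    intro g _
    exact continuous_const.mul (hσc.comp (continuous_apply g))
  have hKne : K.Nonempty := by
    refine ⟨fun _ => Real.sqrt (2 / n), fun g => Real.sqrt_nonneg _, ?_⟩
    rw [Finset.sum_const, Real.sq_sqrt (by positivity), Finset.card_univ, Fintype.card_fin,
      nsmul_eq_mul]
    field_simp
  have hKcomp : IsCompact K := by
    refine IsCompact.of_isClosed_subset
      (isCompact_univ_pi (fun g => isCompact_Icc (a := (0:ℝ)) (b := Real.sqrt 2))) ?_ ?_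
    · have h1 : IsClosed {s : Fin n → ℝ | ∀ g, 0 ≤ s g} := by
        rw [Set.setOf_forall]
        exact isClosed_iInter fun g => isClosed_le continuous_const (continuous_apply g)
      have h2 : IsClosed {s : Fin n → ℝ | ∑ g, s g ^ 2 = 2} :=
        isClosed_eq (continuous_finset_sum _ fun g _ => (continuous_apply g).pow 2)
          continuous_const
      exact h1.inter h2
    · intro s hs
      rw [Set.mem_univ_pi]
      intro g
      refine ⟨hs.1 g, ?_⟩
      have h1 : s g ^ 2 ≤ 2 := by
        calc s g ^ 2 ≤ ∑ g', s g' ^ 2 :=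
          Finset.single_le_sum (fun g' _ => sq_nonneg (s g')) (Finset.mem_univ g)
        _ = 2 := hs.2
      nlinarith [hs.1 g, Real.sq_sqrt (by norm_num : (0:ℝ) ≤ 2), Real.sqrt_nonneg 2]
  obtain ⟨s, hsK, hsmax⟩ := hKcomp.exists_isMaxOn hKne hFc.continuousOn
  have hsmax' : ∀ x ∈ K, F x ≤ F s := fun x hx => hsmax hx
  -- all coordinates positive
  have hspos : ∀ g, 0 < s g := by
    by_contra hcon
    push_neg at hcon
    obtain ⟨j, hj⟩ := hcon
    have hsj : s j = 0 := le_antisymm hj (hsK.1 j)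
    have hbig : ∃ i, 2 / (n : ℝ) ≤ s i ^ 2 := by
      by_contra hc
      push_neg at hc
      have h1 : ∑ g, s g ^ 2 < ∑ _g : Fin n, (2 / (n : ℝ)) :=
        Finset.sum_lt_sum_of_nonempty Finset.univ_nonempty fun g _ => hc g
      rw [hsK.2, Finset.sum_const, Finset.card_univ, Fintype.card_fin, nsmul_eq_mul,
        mul_div_cancel₀ _ (by exact_mod_cast hn.ne' : (n : ℝ) ≠ 0)] at h1
      exact lt_irrefl _ h1
    obtain ⟨i, hi2⟩ := hbig
    have h2n : (0 : ℝ) < 2 / n := by positivity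
    have hipos : 0 < s i := by
      rcases (hsK.1 i).lt_or_eq with h | h
      · exact h
      · exfalso; rw [← h] at hi2; norm_num at hi2; linarith
    have hij : i ≠ j := by rintro rfl; rw [hsj] at hipos; exact lt_irrefl _ hipos
    set C : ℝ := φ (s i / 2) with hCdef
    have hev1 : ∀ᶠ t in nhdsWithin (0 : ℝ) (Ioi 0), p i * C / p j < φ t :=
      hφtop.eventually_gt_atTop _
    have hev2 : Ioo (0 : ℝ) (s i / 2) ∈ nhdsWithin (0 : ℝ) (Ioi 0) :=
      Ioo_mem_nhdsGT_of_mem ⟨le_refl _, by linarith⟩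
    obtain ⟨t, ht1, ht0, hts⟩ :=
      (hev1.and (eventually_of_mem hev2 fun t ht => ht)).exists
    set a : ℝ := Real.sqrt (s i ^ 2 - t ^ 2) with hadef
    have hti : t < s i := by linarith
    have hsub : 0 < s i ^ 2 - t ^ 2 := by nlinarith
    have ha2 : a ^ 2 = s i ^ 2 - t ^ 2 := Real.sq_sqrt hsub.le
    have hapos : 0 < a := Real.sqrt_pos.2 hsub
    have hahalf : s i / 2 ≤ a := by
      rw [hadef, show s i / 2 = Real.sqrt ((s i / 2) ^ 2) from
        (Real.sqrt_sq (by linarith)).symm]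
      apply Real.sqrt_le_sqrt
      nlinarith
    set s' := Function.update (Function.update s i a) j t with hs'def
    have hs'K : s' ∈ K := by
      constructor
      · intro g
        rcases eq_or_ne g j with rfl | hgj
        · rw [hs'def, Function.update_self]; exact ht0.le
        · rw [hs'def, Function.update_of_ne hgj]
          rcases eq_or_ne g i with rfl | hgi
          · rw [Function.update_self]; exact hapos.le
          · rw [Function.update_of_ne hgi]; exact hsK.1 g
      · have e1 := sum_update_aux (fun _ x => x ^ 2) (Function.update s i a) j t
        have e2 := sum_update_aux (fun _ x => x ^ 2) s i a
        show ∑ g, s' g ^ 2 = 2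
        rw [hs'def, e1, Function.update_of_ne (Ne.symm hij), e2, hsK.2, hsj]
        linarith [ha2]
    have hle := hsmax' s' hs'K
    have hFs' := sum_update_aux (fun g x => p g * σ x) (Function.update s i a) j t
    have hFs2 := sum_update_aux (fun g x => p g * σ x) s i a
    simp only [hFdef, hs'def] at hle
    rw [hFs', Function.update_of_ne (Ne.symm hij), hFs2, hsj] at hle
    -- tangent bounds
    have hT1 : σ (s i) ≤ σ a + σ' a / a / 2 * (s i ^ 2 - a ^ 2) :=
      tangent σ σ' hder hφdec hapos (hsK.1 i)
    have hT2 : σ 0 ≤ σ t + σ' t / t / 2 * (0 ^ 2 - t ^ 2) :=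
      tangent σ σ' hder hφdec ht0 le_rfl
    have hCa : σ' a / a ≤ C := by
      rcases eq_or_lt_of_le hahalf with h | h
      · rw [hCdef, hφdef, ← h]
      · exact (hφdec (mem_Ioi.2 (by linarith)) (mem_Ioi.2 hapos) h).le
    simp only [hφdef] at ht1
    have ht2pos : 0 < t ^ 2 := by positivity
    have hsia : s i ^ 2 - a ^ 2 = t ^ 2 := by linarith
    rw [hsia] at hT1
    have h7 : (0 : ℝ) ^ 2 - t ^ 2 = -(t ^ 2) := by ring
    rw [h7] at hT2
    have k0 : σ (s i) - σ a ≤ C * t ^ 2 / 2 := by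
      have h6 : 0 ≤ (C - σ' a / a) * t ^ 2 := mul_nonneg (sub_nonneg.2 hCa) ht2pos.le
      linarith only [hT1, h6]
    have k1 : p i * (σ (s i) - σ a) ≤ p i * (C * t ^ 2 / 2) :=
      mul_le_mul_of_nonneg_left k0 (hp i).le
    have k2 : σ' t / t * t ^ 2 / 2 ≤ σ t - σ 0 := by linarith only [hT2]
    have k3 : p j * (σ' t / t * t ^ 2 / 2) ≤ p j * (σ t - σ 0) :=
      mul_le_mul_of_nonneg_left k2 (hp j).le
    have k4 : p i * (C * t ^ 2 / 2) < p j * (σ' t / t * t ^ 2 / 2) := by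
      have h5 : p i * C < σ' t / t * p j := (div_lt_iff₀ (hp j)).1 ht1
      linarith only [mul_pos (sub_pos.2 h5) ht2pos]
    linarith only [k1, k3, k4, hle]
  -- KKT
  have hne2 : ∀ i j : Fin n, i ≠ j → ¬(p j * φ (s j) < p i * φ (s i)) := by
    intro i j hij hlt
    have T1 : Tendsto (fun t : ℝ => p i * φ (Real.sqrt (s i ^ 2 + t)))
        (nhdsWithin 0 (Ioi 0)) (nhds (p i * φ (s i))) := by
      apply Tendsto.const_mul
      have h1 : Tendsto (fun t : ℝ => s i ^ 2 + t) (nhdsWithin (0 : ℝ) (Ioi 0))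
          (nhds (s i ^ 2)) := by
        have hc1 : Continuous (fun t : ℝ => s i ^ 2 + t) := continuous_const.add continuous_id
        have h0 := hc1.tendsto 0
        simp only [add_zero] at h0
        exact h0.mono_left nhdsWithin_le_nhds
      have h2 : Tendsto (fun t : ℝ => Real.sqrt (s i ^ 2 + t)) (nhdsWithin (0 : ℝ) (Ioi 0))
          (nhds (s i)) := by
        have := (Real.continuous_sqrt.tendsto (s i ^ 2)).comp h1
        rwa [Real.sqrt_sq (hspos i).le] at this
      exact ((hφcont (s i) (hspos i)).tendsto).comp h2
    have T2 : Tendsto (fun t : ℝ => p j * φ (Real.sqrt (s j ^ 2 - t)))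
        (nhdsWithin 0 (Ioi 0)) (nhds (p j * φ (s j))) := by
      apply Tendsto.const_mul
      have h1 : Tendsto (fun t : ℝ => s j ^ 2 - t) (nhdsWithin (0 : ℝ) (Ioi 0))
          (nhds (s j ^ 2)) := by
        have hc1 : Continuous (fun t : ℝ => s j ^ 2 - t) := continuous_const.sub continuous_id
        have h0 := hc1.tendsto 0
        simp only [sub_zero] at h0
        exact h0.mono_left nhdsWithin_le_nhds
      have h2 : Tendsto (fun t : ℝ => Real.sqrt (s j ^ 2 - t)) (nhdsWithin (0 : ℝ) (Ioi 0))
          (nhds (s j)) := by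
        have := (Real.continuous_sqrt.tendsto (s j ^ 2)).comp h1
        rwa [Real.sqrt_sq (hspos j).le] at this
      exact ((hφcont (s j) (hspos j)).tendsto).comp h2
    have hevlt := T2.eventually_lt T1 hlt
    have hev2 : Ioo (0 : ℝ) (s j ^ 2) ∈ nhdsWithin (0 : ℝ) (Ioi 0) :=
      Ioo_mem_nhdsGT_of_mem ⟨le_refl _, pow_pos (hspos j) 2⟩
    obtain ⟨t, ht1, ht0, htj⟩ :=
      (hevlt.and (eventually_of_mem hev2 fun t ht => ht)).exists
    set a : ℝ := Real.sqrt (s i ^ 2 + t) with hadef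
    set b : ℝ := Real.sqrt (s j ^ 2 - t) with hbdef
    have ha2 : a ^ 2 = s i ^ 2 + t := Real.sq_sqrt (by positivity)
    have hb2 : b ^ 2 = s j ^ 2 - t := Real.sq_sqrt (by linarith)
    have hapos : 0 < a := Real.sqrt_pos.2 (by positivity)
    have hbpos : 0 < b := Real.sqrt_pos.2 (by linarith)
    set s' := Function.update (Function.update s i a) j b with hs'def
    have hs'K : s' ∈ K := by
      constructor
      · intro g
        rcases eq_or_ne g j with rfl | hgj
        · rw [hs'def, Function.update_self]; exact hbpos.le
        · rw [hs'def, Function.update_of_ne hgj]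
          rcases eq_or_ne g i with rfl | hgi
          · rw [Function.update_self]; exact hapos.le
          · rw [Function.update_of_ne hgi]; exact hsK.1 g
      · have e1 := sum_update_aux (fun _ x => x ^ 2) (Function.update s i a) j b
        have e2 := sum_update_aux (fun _ x => x ^ 2) s i a
        show ∑ g, s' g ^ 2 = 2
        rw [hs'def, e1, Function.update_of_ne (Ne.symm hij), e2, hsK.2]
        linarith [ha2, hb2]
    have hle := hsmax' s' hs'K
    have hFs' := sum_update_aux (fun g x => p g * σ x) (Function.update s i a) j b
    have hFs2 := sum_update_aux (fun g x => p g * σ x) s i a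
    simp only [hFdef, hs'def] at hle
    rw [hFs', Function.update_of_ne (Ne.symm hij), hFs2] at hle
    have hT1 : σ (s i) ≤ σ a + σ' a / a / 2 * (s i ^ 2 - a ^ 2) :=
      tangent σ σ' hder hφdec hapos (hsK.1 i)
    have hT2 : σ (s j) ≤ σ b + σ' b / b / 2 * (s j ^ 2 - b ^ 2) :=
      tangent σ σ' hder hφdec hbpos (hsK.1 j)
    simp only [hφdef] at ht1
    have hsia : s i ^ 2 - a ^ 2 = -t := by linarith
    rw [hsia] at hT1
    have hsjb : s j ^ 2 - b ^ 2 = t := by linarith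
    rw [hsjb] at hT2
    have k1 : p i * (σ (s i) - σ a) ≤ p i * (-(σ' a / a / 2 * t)) := by
      apply mul_le_mul_of_nonneg_left _ (hp i).le
      linarith only [hT1]
    have k2 : p j * (σ (s j) - σ b) ≤ p j * (σ' b / b / 2 * t) := by
      apply mul_le_mul_of_nonneg_left _ (hp j).le
      linarith only [hT2]
    have k3 : p j * (σ' b / b / 2 * t) < p i * (σ' a / a / 2 * t) := by
      linarith only [mul_pos (sub_pos.2 ht1) ht0]
    linarith only [k1, k2, k3, hle]
  have hkkt : ∀ i j : Fin n, p i * φ (s i) = p j * φ (s j) := by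
    intro i j
    rcases eq_or_ne i j with rfl | hij
    · rfl
    rcases lt_trichotomy (p i * φ (s i)) (p j * φ (s j)) with h | h | h
    · exact absurd h (hne2 j i hij.symm)
    · exact h
    · exact absurd h (hne2 i j hij)
  set g₀ : Fin n := ⟨0, hn⟩
  set lam : ℝ := p g₀ * φ (s g₀) / 2 with hlam
  have hlampos : 0 < lam := by
    have := hφpos (s g₀) (hspos g₀)
    have := hp g₀
    positivity
  have hprof : ∀ g, φ (s g) = 2 * lam / p g := by
    intro g
    have h1 : p g * φ (s g) = 2 * lam := by rw [hlam]; rw [hkkt g g₀]; ring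
    field_simp [ne_of_gt (hp g)] at h1 ⊢
    linarith
  refine ⟨lam, hlampos, s, fun g => ⟨hspos g, hprof g⟩, hsK.2,
    fun s' h1 h2 => hsmax' s' ⟨h1, h2⟩, ?_, ?_⟩
  · -- ordering
    intro i j hpji
    by_contra hcon
    push_neg at hcon
    have hlt : φ (s i) < φ (s j) := by
      rw [hprof i, hprof j]
      exact div_lt_div_of_pos_left (by linarith) (hp j) hpji
    rcases eq_or_lt_of_le hcon with h | h
    · rw [h] at hlt; exact lt_irrefl _ hlt
    · exact absurd hlt
        (not_lt.2 (hφdec (mem_Ioi.2 (hspos i)) (mem_Ioi.2 (hspos j)) h).le)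
  · -- uniqueness
    intro lam' s'' hlam' hs'' hsum''
    have hkey : ∀ (μ ν : ℝ) (u v : Fin n → ℝ), 0 < μ → 0 < ν →
        (∀ g, 0 < u g ∧ φ (u g) = 2 * μ / p g) →
        (∀ g, 0 < v g ∧ φ (v g) = 2 * ν / p g) →
        (∑ g, (u g) ^ 2 = 2) → (∑ g, (v g) ^ 2 = 2) → ¬ (μ < ν) := by
      intro μ ν u v hμ hν hu hv husum hvsum hlt
      have hvu : ∀ g, v g < u g := by
        intro g
        have h1 : φ (u g) < φ (v g) := by
          rw [(hu g).2, (hv g).2]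
          apply div_lt_div_of_pos_right (by linarith) (hp g)
        by_contra hcon
        push_neg at hcon
        rcases eq_or_lt_of_le hcon with h | h
        · rw [h] at h1; exact lt_irrefl _ h1
        · exact absurd h1
            (not_lt.2 (hφdec (mem_Ioi.2 (hu g).1) (mem_Ioi.2 (hv g).1) h).le)
      have : ∑ g, (v g) ^ 2 < ∑ g, (u g) ^ 2 := by
        apply Finset.sum_lt_sum_of_nonempty Finset.univ_nonempty
        intro g _
        exact pow_lt_pow_left₀ (hvu g) (hv g).1.le (by norm_num)
      rw [husum, hvsum] at this
      exact lt_irrefl _ this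
    have hlameq : lam' = lam := by
      by_contra hne
      rcases lt_or_gt_of_ne hne with h | h
      · exact hkey lam' lam s'' s hlam' hlampos hs'' (fun g => ⟨hspos g, hprof g⟩) hsum'' hsK.2 h
      · exact hkey lam lam' s s'' hlampos hlam' (fun g => ⟨hspos g, hprof g⟩) hs'' hsK.2 hsum'' h
    refine ⟨hlameq, funext fun g => ?_⟩
    have h1 : φ (s'' g) = φ (s g) := by
      have h2 := hprof g
      simp only [hφdef] at h2 ⊢
      rw [(hs'' g).2, hlameq, h2]
    exact hφdec.injOn (mem_Ioi.2 (hs'' g).1) (mem_Ioi.2 (hspos g)) h1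
end

section
/- Let F̃ = [f̃₁, f̃₂, F̃_r] ∈ ℝ^{n×K} with η > 0, G = F̃ᵀF̃ + ηI, and P = I − F̃_r(F̃_rᵀF̃_r + ηI)⁻¹F̃_rᵀ. Then the (1,2) entry of G⁻¹ equals −(f̃₁ᵀPf̃₂) / [(η + f̃₁ᵀPf̃₁)(η + f̃₂ᵀPf̃₂) − (f̃₁ᵀPf̃₂)²], and in particular has sign opposite to f̃₁ᵀPf̃₂. -/
open Matrix

/-- Feature repulsion: for `F̃ = [f̃₁, f̃₂, F̃ᵣ]`, `η > 0`, `G = F̃ᵀF̃ + ηI` and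
`P = I - F̃ᵣ(F̃ᵣᵀF̃ᵣ + ηI)⁻¹F̃ᵣᵀ`, the `(1,2)` entry of `G⁻¹` equals
`-(f̃₁ᵀPf̃₂) / [(η + f̃₁ᵀPf̃₁)(η + f̃₂ᵀPf̃₂) - (f̃₁ᵀPf̃₂)²]`, and in particular has sign
opposite to `f̃₁ᵀPf̃₂`. -/
theorem stmt17 (n m : ℕ) (f1 f2 : Fin n → ℝ) (Fr : Matrix (Fin n) (Fin m) ℝ)
    (η : ℝ) (hη : 0 < η)
    (F : Matrix (Fin n) (Fin 2 ⊕ Fin m) ℝ)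
    (hF : F = Matrix.of fun i j =>
      Sum.elim (fun j2 : Fin 2 => if j2 = 0 then f1 i else f2 i) (fun jr => Fr i jr) j)
    (Gm : Matrix (Fin 2 ⊕ Fin m) (Fin 2 ⊕ Fin m) ℝ) (hGm : Gm = Fᵀ * F + η • 1)
    (P : Matrix (Fin n) (Fin n) ℝ)
    (hP : P = 1 - Fr * (Frᵀ * Fr + η • 1)⁻¹ * Frᵀ) :
    Gm⁻¹ (Sum.inl 0) (Sum.inl 1) =
      -(f1 ⬝ᵥ (P *ᵥ f2)) /
        ((η + f1 ⬝ᵥ (P *ᵥ f1)) * (η + f2 ⬝ᵥ (P *ᵥ f2)) - (f1 ⬝ᵥ (P *ᵥ f2)) ^ 2) ∧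
    Real.sign (Gm⁻¹ (Sum.inl 0) (Sum.inl 1)) = -Real.sign (f1 ⬝ᵥ (P *ᵥ f2)) := by
  -- abbreviations
  set g : Fin 2 → Fin n → ℝ := fun i k => if i = 0 then f1 k else f2 k with hg
  set E : Matrix (Fin 2) (Fin n) ℝ := Matrix.of g with hE
  set D : Matrix (Fin m) (Fin m) ℝ := Frᵀ * Fr + η • 1 with hDdef
  set B : Matrix (Fin 2) (Fin m) ℝ := E * Fr with hB
  set A : Matrix (Fin 2) (Fin 2) ℝ := E * Eᵀ + η • 1 with hA
  -- positive definiteness of η • 1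
  have hsmul : ∀ (k : Type) [Fintype k] [DecidableEq k],
      (η • (1 : Matrix k k ℝ)).PosDef := by
    intro k _ _
    rw [smul_one_eq_diagonal]
    exact Matrix.PosDef.diagonal (fun _ => hη)
  have hDpd : D.PosDef := by
    rw [hDdef, ← conjTranspose_eq_transpose_of_trivial]
    exact Matrix.PosDef.posSemidef_add (posSemidef_conjTranspose_mul_self Fr) (hsmul _)
  have hGpd : Gm.PosDef := by
    rw [hGm, ← conjTranspose_eq_transpose_of_trivial]
    exact Matrix.PosDef.posSemidef_add (posSemidef_conjTranspose_mul_self F) (hsmul _)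
  have hBH : Bᴴ = Frᵀ * Eᵀ := by
    rw [hB, conjTranspose_mul, conjTranspose_eq_transpose_of_trivial,
      conjTranspose_eq_transpose_of_trivial]
  -- block decomposition
  have hGfb : Gm = fromBlocks A B Bᴴ D := by
    have hFc : F = fromCols Eᵀ Fr := by
      rw [hF]; ext i j
      cases j with
      | inl j => simp [fromCols, hE, hg]
      | inr j => simp [fromCols]
    have hFt : Fᵀ = fromRows E Frᵀ := by
      rw [hFc, transpose_fromCols, transpose_transpose]
    rw [hGm, hFt, hFc, fromRows_mul_fromCols, hBH, hA, hDdef,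
      ← fromBlocks_one, fromBlocks_smul, fromBlocks_add]
    simp [hB]
  have hGfbpd : (fromBlocks A B Bᴴ D).PosDef := hGfb ▸ hGpd
  haveI iD : Invertible D := hDpd.isUnit.invertible
  have hiD : ⅟D = D⁻¹ := invOf_eq_nonsing_inv D
  set S : Matrix (Fin 2) (Fin 2) ℝ := A - B * D⁻¹ * Bᴴ with hSdef
  -- the Schur complement is positive definite
  have hSherm : S.IsHermitian :=
    (Matrix.IsHermitian.fromBlocks₂₂ A B hDpd.isHermitian).mp hGfbpd.isHermitian
  have hSpd : S.PosDef := by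
    refine Matrix.PosDef.of_dotProduct_mulVec_pos hSherm (fun x hx => ?_)
    have hv : (x ⊕ᵥ -((D⁻¹ * Bᴴ) *ᵥ x)) ≠ 0 := by
      intro h
      apply hx
      funext i
      exact congrFun h (Sum.inl i)
    have h1 := hGfbpd.dotProduct_mulVec_pos hv
    rw [dotProduct_mulVec, schur_complement_eq₂₂ A B x _ hDpd.isHermitian] at h1
    simp only [add_neg_cancel, dotProduct_zero, zero_add, star_trivial] at h1
    rw [dotProduct_mulVec, star_trivial]; exact h1
  haveI iG : Invertible (fromBlocks A B Bᴴ D) := hGfbpd.isUnit.invertible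
  haveI iS : Invertible S := hSpd.isUnit.invertible
  haveI iS' : Invertible (A - B * ⅟D * Bᴴ) := by rw [hiD]; exact iS
  -- the (0,1) entry of the inverse
  have hentry : Gm⁻¹ (Sum.inl 0) (Sum.inl 1) = S⁻¹ 0 1 := by
    rw [hGfb, ← invOf_eq_nonsing_inv, invOf_fromBlocks₂₂_eq, fromBlocks_apply₁₁]
    have h2 : ⅟(A - B * ⅟D * Bᴴ) = S⁻¹ := by
      rw [invOf_eq_nonsing_inv, hiD]
    rw [h2]
  -- entries of S
  have hEME : ∀ (M : Matrix (Fin n) (Fin n) ℝ) (i j : Fin 2),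
      (E * M * Eᵀ) i j = g i ⬝ᵥ (M *ᵥ g j) := by
    intro M i j
    simp only [Matrix.mul_apply, Matrix.transpose_apply, dotProduct, Matrix.mulVec,
      Finset.sum_mul, Finset.mul_sum, hE, Matrix.of_apply]
    rw [Finset.sum_comm]
    exact Finset.sum_congr rfl fun k _ => Finset.sum_congr rfl fun l _ => by ring
  have hStop : ∀ i j, S i j = (if i = j then η else 0) + g i ⬝ᵥ (P *ᵥ g j) := by
    intro i j
    have hBDB : B * D⁻¹ * Bᴴ = E * (Fr * D⁻¹ * Frᵀ) * Eᵀ := by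
      rw [hB, hBH]
      simp only [Matrix.mul_assoc]
    have hEE : E * Eᵀ = E * (1 : Matrix (Fin n) (Fin n) ℝ) * Eᵀ := by rw [Matrix.mul_one]
    rw [hSdef, hBDB, hA]
    rw [Matrix.sub_apply, Matrix.add_apply, hEE, hEME, hEME, hP]
    rw [Matrix.sub_mulVec, Matrix.one_mulVec, dotProduct_sub]
    rw [Matrix.smul_apply, Matrix.one_apply]
    split_ifs <;> simp only [smul_eq_mul, smul_zero, mul_one] <;> ring
  have hg0 : g 0 = f1 := by funext k; simp [hg]
  have hg1 : g 1 = f2 := by funext k; simp [hg]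
  have hPsymm : Pᵀ = P := by
    have hDT : Dᵀ = D := by
      rw [← conjTranspose_eq_transpose_of_trivial]
      exact hDpd.isHermitian
    rw [hP]
    rw [transpose_sub, transpose_one, transpose_mul, transpose_mul, transpose_transpose,
      transpose_nonsing_inv, hDT, Matrix.mul_assoc]
  have hsym : f2 ⬝ᵥ (P *ᵥ f1) = f1 ⬝ᵥ (P *ᵥ f2) := by
    nth_rewrite 1 [← hPsymm]
    rw [Matrix.mulVec_transpose, dotProduct_comm, ← Matrix.dotProduct_mulVec]
  have hS00 : S 0 0 = η + f1 ⬝ᵥ (P *ᵥ f1) := by rw [hStop, hg0]; simp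
  have hS01 : S 0 1 = f1 ⬝ᵥ (P *ᵥ f2) := by rw [hStop, hg0, hg1]; simp
  have hS10 : S 1 0 = f1 ⬝ᵥ (P *ᵥ f2) := by rw [hStop, hg0, hg1, hsym]; simp
  have hS11 : S 1 1 = η + f2 ⬝ᵥ (P *ᵥ f2) := by rw [hStop, hg1]; simp
  have hdet : S.det = (η + f1 ⬝ᵥ (P *ᵥ f1)) * (η + f2 ⬝ᵥ (P *ᵥ f2))
      - (f1 ⬝ᵥ (P *ᵥ f2)) ^ 2 := by
    rw [Matrix.det_fin_two, hS00, hS01, hS10, hS11]; ring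
  have hval : S⁻¹ 0 1 = -(f1 ⬝ᵥ (P *ᵥ f2)) /
      ((η + f1 ⬝ᵥ (P *ᵥ f1)) * (η + f2 ⬝ᵥ (P *ᵥ f2)) - (f1 ⬝ᵥ (P *ᵥ f2)) ^ 2) := by
    rw [Matrix.inv_def, Ring.inverse_eq_inv', Matrix.adjugate_fin_two, hdet]
    have h01 : !![S 1 1, -S 0 1; -S 1 0, S 0 0] 0 1 = -S 0 1 := by
      simp
    rw [Matrix.smul_apply, h01, hS01, smul_eq_mul]
    ring
  have hdpos : 0 < (η + f1 ⬝ᵥ (P *ᵥ f1)) * (η + f2 ⬝ᵥ (P *ᵥ f2))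
      - (f1 ⬝ᵥ (P *ᵥ f2)) ^ 2 := hdet ▸ hSpd.det_pos
  refine ⟨by rw [hentry, hval], ?_⟩
  rw [hentry, hval]
  rcases lt_trichotomy (f1 ⬝ᵥ (P *ᵥ f2)) 0 with h | h | h
  · rw [Real.sign_of_pos (div_pos (neg_pos.mpr h) hdpos), Real.sign_of_neg h]
    norm_num
  · simp [h]
  · rw [Real.sign_of_neg (div_neg_of_neg_of_pos (neg_lt_zero.mpr h) hdpos),
      Real.sign_of_pos h]
end
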